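/- If m₂ ≤ m₁, then the m₁ × m₂ bishop-on-a-rook graph contains the rook graph K_{m₁} □ K_{m₂} as a spanning subgraph. -/

import Mathlib

open SimpleGraph

/-- The `m₁ × m₂` bishop-on-a-rook graph: cells `(i,j)` of an `m₁ × m₂` board,
two cells adjacent iff they lie in distinct rows (vertical or diagonal moves). -/
def borGraph (m₁ m₂ : ℕ) : SimpleGraph (Fin m₁ × Fin m₂) where
  Adj a b := a.1 ≠ b.1
  symm := ⟨fun _ _ h => h.symm⟩
  loopless := ⟨fun _ h => h rfl⟩

/-- If `m₂ ≤ m₁`, the `m₁ × m₂` bishop-on-a-rook graph contains the rook graph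
`K_{m₁} □ K_{m₂}` as a spanning subgraph (up to isomorphism). -/
theorem rook_spanning_subgraph_of_bor (m₁ m₂ : ℕ) (h : m₂ ≤ m₁) :
    ∃ G' : SimpleGraph (Fin m₁ × Fin m₂), G' ≤ borGraph m₁ m₂ ∧
      Nonempty ((((⊤ : SimpleGraph (Fin m₁)) □ (⊤ : SimpleGraph (Fin m₂)))) ≃g G') := by
  rcases m₁ with _ | n
  · -- `Fin 0 × Fin m₂` is empty
    refine ⟨⊥, bot_le, ⟨⟨Equiv.refl _, ?_⟩⟩⟩
    intro a
    exact a.1.elim0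
  · set R := (⊤ : SimpleGraph (Fin (n+1))) □ (⊤ : SimpleGraph (Fin m₂)) with hR
    let c : Fin m₂ → Fin (n+1) := Fin.castLE h
    let e : Fin (n+1) × Fin m₂ ≃ Fin (n+1) × Fin m₂ :=
      { toFun := fun p => (p.1 + c p.2, p.2)
        invFun := fun p => (p.1 - c p.2, p.2)
        left_inv := fun p => by simp
        right_inv := fun p => by simp }
    refine ⟨{ Adj := fun a b => R.Adj (e.symm a) (e.symm b)
              symm := ⟨fun a b hab => hab.symm⟩
              loopless := ⟨fun a hab => R.loopless.irrefl _ hab⟩ }, ?_, ⟨⟨e, ?_⟩⟩⟩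
    · intro a b hab
      rw [SimpleGraph.boxProd_adj] at hab
      show a.1 ≠ b.1
      have ha : a = e (e.symm a) := (e.apply_symm_apply a).symm
      have hb : b = e (e.symm b) := (e.apply_symm_apply b).symm
      set x := e.symm a
      set y := e.symm b
      rw [ha, hb]
      show x.1 + c x.2 ≠ y.1 + c y.2
      rcases hab with ⟨h1, h2⟩ | ⟨h2, h1⟩
      · rw [h2]
        intro hc
        exact h1 (add_right_cancel hc)
      · rw [h1]
        intro hc
        have := add_left_cancel hc
        exact h2 (Fin.castLE_injective h this)
    · intro a b
      show R.Adj (e.symm (e a)) (e.symm (e b)) ↔ R.Adj a b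
      rw [e.symm_apply_apply, e.symm_apply_apply]
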